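/- For the service distribution family G(t) = 1 - ((1-e^{-ρ})(λ+β))/(λ e^{-ρ}(e^{(λ+β)t} - 1) + λ) with constant β satisfying -λ < β ≤ λ/(e^ρ - 1), one has ∫₀^∞ (1 - G(t)) dt = α where ρ = λα; i.e., this family has mean service time α consistent with the traffic intensity ρ. -/

import Mathlib

open MeasureTheory Real Set

/-- For the service time distribution family
`G(t) = 1 - (1-e^{-ρ})(λ+β) / (λ e^{-ρ}(e^{(λ+β)t} - 1) + λ)` with constant `β`,
`-λ < β ≤ λ/(e^ρ - 1)`, one has `∫₀^∞ (1 - G(t)) dt = α` where `ρ = λα`. -/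
theorem special_service_family_mean
    (l α ρ β : ℝ) (hl : 0 < l) (hα : 0 < α) (hρ : ρ = l * α)
    (hβ₁ : -l < β) (hβ₂ : β ≤ l / (Real.exp ρ - 1))
    (G : ℝ → ℝ)
    (hG : ∀ t : ℝ, 0 ≤ t → G t = 1 -
      (1 - Real.exp (-ρ)) * (l + β) /
        (l * Real.exp (-ρ) * (Real.exp ((l + β) * t) - 1) + l)) :
    ∫ t in Ioi (0:ℝ), (1 - G t) = α := by
  set c := Real.exp (-ρ) with hc
  set k := l + β with hk
  have hkpos : 0 < k := by simp [hk]; linarith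
  have hρpos : 0 < ρ := by rw [hρ]; positivity
  have hc0 : 0 < c := Real.exp_pos _
  have hc1 : c < 1 := by
    rw [hc]
    calc Real.exp (-ρ) < Real.exp 0 := Real.exp_lt_exp.2 (by linarith)
    _ = 1 := Real.exp_zero
  have hden : ∀ t : ℝ, 0 < c * Real.exp (k * t) + (1 - c) := by
    intro t
    have := Real.exp_pos (k * t)
    nlinarith
  set f : ℝ → ℝ := fun t => ((1 - c) * k) / (l * (c * Real.exp (k * t) + (1 - c)))
    with hf
  set F : ℝ → ℝ := fun t => (k * t - Real.log (c * Real.exp (k * t) + (1 - c))) / l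
    with hF
  have hderiv : ∀ t : ℝ, HasDerivAt F (f t) t := by
    intro t
    have h1 : HasDerivAt (fun t : ℝ => c * Real.exp (k * t) + (1 - c))
        (c * (k * Real.exp (k * t))) t := by
      have hkt : HasDerivAt (fun y : ℝ => k * y) k t := by
        simpa using (hasDerivAt_id t).const_mul k
      have h := ((hkt.exp).const_mul c).add_const (1 - c)
      exact h.congr_deriv (by ring)
    have h2 : HasDerivAt (fun t : ℝ => Real.log (c * Real.exp (k * t) + (1 - c)))
        (c * (k * Real.exp (k * t)) / (c * Real.exp (k * t) + (1 - c))) t :=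
      h1.log (hden t).ne'
    have h3 : HasDerivAt (fun t : ℝ => k * t) k t := by
      simpa using (hasDerivAt_id t).const_mul k
    have h4 := ((h3.sub h2).div_const l)
    refine h4.congr_deriv ?_
    have hd := (hden t).ne'
    rw [hf]
    field_simp
    ring
  have hcont : ContinuousWithinAt F (Ici 0) 0 :=
    (hderiv 0).continuousAt.continuousWithinAt
  have hfpos : ∀ t ∈ Ioi (0:ℝ), 0 ≤ f t := by
    intro t _
    have h0 : 0 < 1 - c := by linarith
    rw [hf]
    exact le_of_lt (div_pos (mul_pos h0 hkpos) (mul_pos hl (hden t)))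
  have htend : Filter.Tendsto F Filter.atTop (nhds α) := by
    have hFeq : ∀ t : ℝ, F t = -Real.log (c + (1 - c) * Real.exp (-(k * t))) / l := by
      intro t
      have he : c * Real.exp (k * t) + (1 - c) =
          Real.exp (k * t) * (c + (1 - c) * Real.exp (-(k * t))) := by
        rw [Real.exp_neg]
        field_simp
      rw [hF]
      simp only
      rw [he, Real.log_mul (Real.exp_pos _).ne' (by
          have h1 := hden t
          have h2 : Real.exp (k*t) * (c + (1-c)*Real.exp (-(k*t))) ≠ 0 := by
            rw [← he]; exact h1.ne'
          exact fun h => h2 (by rw [h, mul_zero])), Real.log_exp]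
      ring
    rw [funext hFeq]
    have h1 : Filter.Tendsto (fun t : ℝ => c + (1 - c) * Real.exp (-(k * t)))
        Filter.atTop (nhds c) := by
      have : Filter.Tendsto (fun t : ℝ => Real.exp (-(k * t))) Filter.atTop (nhds 0) := by
        have h : Filter.Tendsto (fun t : ℝ => k * t) Filter.atTop Filter.atTop :=
          Filter.tendsto_id.const_mul_atTop hkpos
        exact Real.tendsto_exp_atBot.comp (Filter.tendsto_neg_atTop_atBot.comp h)
      have := this.const_mul (1 - c)
      simpa using (tendsto_const_nhds.add this)
    have h2 : Filter.Tendsto (fun t : ℝ => -Real.log (c + (1 - c) * Real.exp (-(k * t))) / l)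
        Filter.atTop (nhds (-Real.log c / l)) := by
      exact (((Real.continuousAt_log hc0.ne').tendsto.comp h1).neg).div_const l
    have : -Real.log c / l = α := by
      rw [hc, Real.log_exp, neg_neg, hρ]
      field_simp
    rwa [this] at h2
  have key : ∫ t in Ioi (0:ℝ), f t = α - F 0 :=
    integral_Ioi_of_hasDerivAt_of_nonneg hcont (fun x _ => hderiv x) hfpos htend
  have hF0 : F 0 = 0 := by
    rw [hF]; simp
  have hcongr : ∫ t in Ioi (0:ℝ), (1 - G t) = ∫ t in Ioi (0:ℝ), f t := by
    apply setIntegral_congr_fun measurableSet_Ioi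
    intro t ht
    have ht0 : (0:ℝ) ≤ t := le_of_lt ht
    show 1 - G t = f t
    rw [hG t ht0, hf]
    rw [show l * c * (Real.exp (k * t) - 1) + l = l * (c * Real.exp (k * t) + (1 - c))
      from by ring]
    ring
  rw [hcongr, key, hF0, sub_zero]
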